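/- Let n be a positive integer. Consider partial transformations of the set {1,…,n+1} (equivalently, total maps on {1,…,n+1} ∪ {θ} fixing θ, where θ denotes 'undefined'), composed left to right. Let a be the partial transformation with a(i) = i+1 for 1 ≤ i ≤ n−1, a(n) = 1, and a undefined at n+1; let b be the partial transformation with b(n+1) = 1, b(i) = i+1 for 1 ≤ i ≤ n−1, and b undefined at n; for 1 ≤ i,j ≤ n+1 let e_{i,j} be the partial transformation with domain {i} sending i to j. Let N be the set consisting of the identity transformation, all elements of the subsemigroup generated by a and b, all the maps e_{i,j}, and the empty transformation; N is a subsemigroup of the partial transformation semigroup (the e_{i,j} together with the empty map form an ideal isomorphic to M⁰({1},n+1,n+1;I_{n+1})). Then N is Mal'cev nilpotent if and only if n is odd. -/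

import Mathlib

namespace SMN

variable {S : Type*}

/-- Mal'cev sequences `(λ_n, ρ_n)`; `z k` plays the role of `z_{k+1}`. -/
def lr [Mul S] (x y : S) (z : ℕ → S) : ℕ → S × S
  | 0 => (x, y)
  | n + 1 =>
    let p := lr x y z n
    (p.1 * z n * p.2, p.2 * z n * p.1)

/-- Cyclic shift by `k` in `Fin t`. -/
def cyc {t : ℕ} (i : Fin t) (k : ℕ) : Fin t :=
  ⟨(i.val + k) % t, Nat.mod_lt _ i.pos⟩

/-- Strong Mal'cev sequences `λ_{n,i}`; `z k` plays the role of `z_{k+1}`. -/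
def slam [Mul S] {t : ℕ} (x : Fin t → S) (z : ℕ → S) : ℕ → Fin t → S
  | 0 => x
  | n + 1 =>
    let f := slam x z n
    fun i => (List.range (t - 1)).foldl (fun acc j => acc * z n * f (cyc i (j + 1))) (f i)

/-- A semigroup is Mal'cev nilpotent if for some `n ≥ 1`,
`λ_n = ρ_n` for all `x, y ∈ S` and `z₁, …, z_n ∈ S¹`. -/
def MalcevNilpotent (S : Type*) [Semigroup S] : Prop :=
  ∃ n : ℕ, 1 ≤ n ∧ ∀ (x y : S) (z : ℕ → WithOne S),
    (lr (x : WithOne S) (y : WithOne S) z n).1 = (lr (x : WithOne S) (y : WithOne S) z n).2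

/-- Strong Mal'cev nilpotency at level `n`. -/
def SMNAt (S : Type*) [Semigroup S] (n : ℕ) : Prop :=
  ∀ t : ℕ, 2 ≤ t → ∀ (x : Fin t → S) (z : ℕ → WithOne S) (i j : Fin t),
    slam (fun k => (x k : WithOne S)) z n i = slam (fun k => (x k : WithOne S)) z n j

/-- A semigroup is strongly Mal'cev nilpotent if for some `n ≥ 1`, for every `t ≥ 2`,
`λ_{n,1} = ⋯ = λ_{n,t}` for all `x₁, …, x_t ∈ S` and `z₁, …, z_n ∈ S¹`. -/
def StronglyMalcevNilpotent (S : Type*) [Semigroup S] : Prop :=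
  ∃ n : ℕ, 1 ≤ n ∧ SMNAt S n

/-- `y` is an inverse of `x`. -/
def IsInverseOf [Semigroup S] (y x : S) : Prop := x * y * x = x ∧ y * x * y = y

/-- A block group: every element has at most one inverse. -/
def BlockGroup (S : Type*) [Semigroup S] : Prop :=
  ∀ x y₁ y₂ : S, IsInverseOf y₁ x → IsInverseOf y₂ x → y₁ = y₂

/-- All subgroups (subsemigroups which are groups) of `S` are nilpotent. -/
def AllSubgroupsNilpotent (S : Type*) [Semigroup S] : Prop :=
  ∀ (G : Type) [Group G], ∀ φ : G → S,
    (∀ a b : G, φ (a * b) = φ a * φ b) → Function.Injective φ → Group.IsNilpotent G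

/-- All subgroups (subsemigroups which are groups) of `S` are trivial. -/
def AllSubgroupsTrivial (S : Type*) [Semigroup S] : Prop :=
  ∀ (G : Type) [Group G], ∀ φ : G → S,
    (∀ a b : G, φ (a * b) = φ a * φ b) → Function.Injective φ → ∀ g : G, g = 1

end SMN

namespace SMN


/-- Partial transformations of `Ω`, composed left to right
(`f * g` means: first `f`, then `g`; `none` plays the role of `θ`). -/
def PT (Ω : Type*) := Ω → Option Ω

instance (Ω : Type*) : Mul (PT Ω) := ⟨fun f g x => (f x).bind g⟩

instance (Ω : Type*) : Semigroup (PT Ω) where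
  mul_assoc f g h := by
    funext x
    change ((f x).bind g).bind h = (f x).bind fun a => (g a).bind h
    cases f x <;> rfl

/-- The partial transformation `a` on `{1,…,n+1}` (0-indexed as `Fin (n+1)`):
`a(i) = i+1` for `1 ≤ i ≤ n−1`, `a(n) = 1`, undefined at `n+1`. -/
def aPT (n : ℕ) : PT (Fin (n + 1)) := fun x =>
  if h : x.val + 1 < n then some ⟨x.val + 1, by omega⟩
  else if x.val + 1 = n then some ⟨0, by omega⟩
  else none

/-- The partial transformation `b` on `{1,…,n+1}`:
`b(n+1) = 1`, `b(i) = i+1` for `1 ≤ i ≤ n−1`, undefined at `n`. -/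
def bPT (n : ℕ) : PT (Fin (n + 1)) := fun x =>
  if x.val = n then some ⟨0, by omega⟩
  else if h : x.val + 1 < n then some ⟨x.val + 1, by omega⟩
  else none

/-- `e_{i,j}`: the partial transformation with domain `{i}` sending `i` to `j`. -/
def ePT (n : ℕ) (i j : Fin (n + 1)) : PT (Fin (n + 1)) :=
  fun x => if x = i then some j else none

/-- The subset `N = {1} ∪ ⟨a,b⟩ ∪ {e_{i,j}} ∪ {θ}` of the partial transformation
semigroup; the maps `e_{i,j}` together with the empty map form an ideal isomorphic to
`M⁰({1},n+1,n+1;I_{n+1})`. -/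
def Nset (n : ℕ) : Set (PT (Fin (n + 1))) :=
  {fun x => some x} ∪ ↑(Subsemigroup.closure {aPT n, bPT n}) ∪
    {f | ∃ i j, f = ePT n i j} ∪ {fun _ => none}
/-! ### Basic partial-transformation lemmas -/

theorem PT.mul_apply {Ω : Type*} (f g : PT Ω) (x : Ω) : (f * g) x = (f x).bind g := rfl

theorem PT.bind_some {Ω : Type*} (a : Ω) (f : PT Ω) : (some a).bind f = f a := rfl

/-- The identity partial transformation. -/
def idPT (Ω : Type*) : PT Ω := fun x => some x

/-- The empty partial transformation. -/
def noPT (Ω : Type*) : PT Ω := fun _ => none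

theorem idPT_mul {Ω : Type*} (f : PT Ω) : idPT Ω * f = f := rfl

theorem mul_idPT {Ω : Type*} (f : PT Ω) : f * idPT Ω = f := by
  funext x
  rw [PT.mul_apply]
  cases f x <;> rfl

theorem noPT_mul {Ω : Type*} (f : PT Ω) : noPT Ω * f = noPT Ω := rfl

theorem mul_noPT {Ω : Type*} (f : PT Ω) : f * noPT Ω = noPT Ω := by
  funext x
  rw [PT.mul_apply]
  cases f x <;> rfl

instance (Ω : Type*) : Monoid (PT Ω) :=
  { (inferInstance : Semigroup (PT Ω)) with
    one := idPT Ω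
    one_mul := idPT_mul
    mul_one := mul_idPT }

theorem one_eq_idPT (Ω : Type*) : (1 : PT Ω) = idPT Ω := rfl

/-! ### Modular arithmetic helper -/

/-- `k % n` as an element of `Fin (n+1)`. -/
def fm (n k : ℕ) : Fin (n + 1) := ⟨k % n % (n + 1), Nat.mod_lt _ n.succ_pos⟩

theorem fm_val {n : ℕ} (hn : 0 < n) (k : ℕ) : (fm n k).val = k % n := by
  have h : k % n < n + 1 := lt_trans (Nat.mod_lt _ hn) n.lt_succ_self
  simp [fm, Nat.mod_eq_of_lt h]

theorem fm_congr {n : ℕ} {k k' : ℕ} (h : k % n = k' % n) : fm n k = fm n k' := by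
  apply Fin.ext; simp [fm, h]

theorem fm_lt {n : ℕ} (hn : 0 < n) (k : ℕ) : (fm n k).val < n := by
  rw [fm_val hn]; exact Nat.mod_lt _ hn

theorem fm_self {n : ℕ} (hn : 0 < n) (p : Fin (n + 1)) (hp : p.val < n) : fm n p.val = p := by
  apply Fin.ext; rw [fm_val hn, Nat.mod_eq_of_lt hp]

theorem fm_add {n : ℕ} (hn : 0 < n) (k m : ℕ) : fm n ((fm n k).val + m) = fm n (k + m) := by
  apply fm_congr
  rw [fm_val hn, Nat.mod_add_mod]

theorem last_or_lt {n : ℕ} (p : Fin (n + 1)) : p = Fin.last n ∨ p.val < n := by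
  rcases Nat.lt_or_ge p.val n with h | h
  · exact Or.inr h
  · exact Or.inl (Fin.ext (le_antisymm (Nat.lt_succ_iff.mp p.isLt) h))

/-! ### The `Nice` predicate: rotation-like partial transformations -/

/-- The semantic class containing all elements of `⟨a,b⟩` (with shift `L`) as well as the
identity transformation. -/
def Nice (n L : ℕ) (w : PT (Fin (n + 1))) : Prop :=
  (∀ p : Fin (n + 1), p.val < n → w p = none ∨ w p = some (fm n (p.val + L))) ∧
  (w (Fin.last n) = none ∨ w (Fin.last n) = some (fm n (n + L - 1)) ∨
    (w = idPT _ ∧ L % n = 0)) ∧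
  (w (Fin.last n) ≠ none → w ≠ idPT _ → w ⟨n - 1, by omega⟩ = none)

theorem nice_id {n : ℕ} (hn : 0 < n) : Nice n 0 (idPT (Fin (n + 1))) := by
  refine ⟨fun p hp => Or.inr ?_, Or.inr (Or.inr ⟨rfl, Nat.zero_mod n⟩), fun _ h => absurd rfl h⟩
  have : fm n (p.val + 0) = p := Fin.ext (by rw [fm_val hn, Nat.add_zero, Nat.mod_eq_of_lt hp])
  rw [this]; rfl

theorem nice_a {n : ℕ} (hn : 0 < n) : Nice n 1 (aPT n) := by
  refine ⟨fun p hp => Or.inr ?_, Or.inl ?_, fun h _ => ?_⟩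
  · show aPT n p = _
    unfold aPT
    rcases Nat.lt_or_ge (p.val + 1) n with h | h
    · rw [dif_pos h]
      congr 1; apply Fin.ext
      rw [fm_val hn, Nat.mod_eq_of_lt h]
    · have h2 : p.val + 1 = n := by omega
      rw [dif_neg (by omega), if_pos h2]
      congr 1; apply Fin.ext
      rw [fm_val hn, h2, Nat.mod_self]
  · show aPT n (Fin.last n) = none
    unfold aPT
    rw [dif_neg (by simp [Fin.last]), if_neg (by simp [Fin.last])]
  · exfalso; apply h
    show aPT n (Fin.last n) = none
    unfold aPT
    rw [dif_neg (by simp [Fin.last]), if_neg (by simp [Fin.last])]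

theorem nice_b {n : ℕ} (hn : 0 < n) : Nice n 1 (bPT n) := by
  refine ⟨fun p hp => ?_, Or.inr (Or.inl ?_), fun _ _ => ?_⟩
  · show bPT n p = none ∨ bPT n p = _
    unfold bPT
    rw [if_neg (by omega)]
    rcases Nat.lt_or_ge (p.val + 1) n with h | h
    · refine Or.inr ?_
      rw [dif_pos h]
      congr 1; apply Fin.ext
      rw [fm_val hn, Nat.mod_eq_of_lt h]
    · refine Or.inl ?_
      rw [dif_neg (by omega)]
  · show bPT n (Fin.last n) = _
    unfold bPT
    rw [if_pos (by simp [Fin.last])]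
    congr 1; apply Fin.ext
    rw [fm_val hn]
    simp
  · show bPT n ⟨n - 1, by omega⟩ = none
    unfold bPT
    rw [if_neg (by simp; omega), dif_neg (by simp; omega)]

theorem nice_mul {n L L' : ℕ} (hn : 0 < n) {u v : PT (Fin (n + 1))}
    (hu : Nice n L u) (hv : Nice n L' v) : Nice n (L + L') (u * v) := by
  obtain ⟨hu1, hu2, hu3⟩ := hu
  obtain ⟨hv1, hv2, hv3⟩ := hv
  have key1 : ∀ p : Fin (n + 1), p.val < n →
      (u * v) p = none ∨ (u * v) p = some (fm n (p.val + (L + L'))) := by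
    intro p hp
    rw [PT.mul_apply]
    rcases hu1 p hp with h | h
    · rw [h]; exact Or.inl rfl
    · rw [h]
      rcases hv1 (fm n (p.val + L)) (fm_lt hn _) with h2 | h2
    
      · rw [PT.bind_some, h2]; exact Or.inl rfl
      · rw [PT.bind_some, h2]
        refine Or.inr ?_
        congr 1
        rw [fm_add hn]
        congr 1
        omega
  refine ⟨key1, ?_, ?_⟩
  · rw [PT.mul_apply]
    rcases hu2 with h | h | ⟨h, h0⟩
    · rw [h]; exact Or.inl rfl
    · rw [h, PT.bind_some]
      rcases hv1 (fm n (n + L - 1)) (fm_lt hn _) with h2 | h2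
      · rw [h2]; exact Or.inl rfl
      · rw [h2]
        refine Or.inr (Or.inl ?_)
        congr 1
        rw [fm_add hn]
        congr 1
        omega
    · subst h
      show v (Fin.last n) = none ∨ v (Fin.last n) = _ ∨ _
      rcases hv2 with h | h | ⟨h, h0'⟩
      · exact Or.inl h
      · refine Or.inr (Or.inl ?_)
        rw [h]
        congr 1
        apply fm_congr
        rw [show n + (L + L') - 1 = (n + L' - 1) + L by omega, Nat.add_mod, h0, Nat.add_zero,
          Nat.mod_mod_of_dvd _ dvd_rfl]
      · subst h
        refine Or.inr (Or.inr ⟨rfl, ?_⟩)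
        rw [Nat.add_mod, h0, h0', Nat.add_zero, Nat.zero_mod]
  · intro h1 h2
    by_cases hid : u = idPT _
    · subst hid
      rw [idPT_mul] at h1 h2 ⊢
      exact hv3 h1 h2
    · have hun : u (Fin.last n) ≠ none := by
        intro h
        apply h1
        rw [PT.mul_apply, h]
        rfl
      have := hu3 hun hid
      rw [PT.mul_apply, this]
      rfl
/-! ### Classification of elements of `Nset` -/

theorem word_nice {n : ℕ} (hn : 0 < n) {w : PT (Fin (n + 1))}
    (hw : w ∈ Subsemigroup.closure {aPT n, bPT n}) : ∃ L, Nice n L w := by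
  induction hw using Subsemigroup.closure_induction with
  | mem x hx =>
    rcases hx with h | h
    · exact ⟨1, h ▸ nice_a hn⟩
    · exact ⟨1, (Set.mem_singleton_iff.mp h) ▸ nice_b hn⟩
  | mul x y hx hy ihx ihy =>
    obtain ⟨L, hL⟩ := ihx
    obtain ⟨L', hL'⟩ := ihy
    exact ⟨L + L', nice_mul hn hL hL'⟩

theorem nice_inj {n L : ℕ} (hn : 0 < n) {w : PT (Fin (n + 1))} (hw : Nice n L w)
    {p q v : Fin (n + 1)} (hp : w p = some v) (hq : w q = some v) : p = q := by
  obtain ⟨h1, h2, h3⟩ := hw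
  have main : ∀ p q : Fin (n + 1), p.val < n → q = Fin.last n →
      w p = some v → w q = some v → False := by
    intro p q hplt hqlast hp hq
    subst hqlast
    by_cases hid : w = idPT _
    · subst hid
      have h4 : Fin.last n = v := Option.some_injective _ hq
      have h5 : p = v := Option.some_injective _ hp
      rw [← h4] at h5
      rw [h5] at hplt
      simp [Fin.last] at hplt
    · have hvdef : w (Fin.last n) ≠ none := by rw [hq]; exact Option.some_ne_none _
      have hpm := h3 hvdef hid
      rcases h2 with h | h | ⟨h, _⟩
      · exact hvdef h
      · have hv1 : v = fm n (n + L - 1) := by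
          rw [hq] at h; exact Option.some_injective _ h
        rcases h1 p hplt with h' | h'
        · rw [hp] at h'; exact Option.some_ne_none _ h'
        · have hv2 : v = fm n (p.val + L) := by
            rw [hp] at h'; exact Option.some_injective _ h'
          have hmod : (p.val + L) % n = (n + L - 1) % n := by
            have := congrArg Fin.val (hv2.symm.trans hv1)
            rwa [fm_val hn, fm_val hn] at this
          have hmod2 : (p.val + L) % n = ((n - 1) + L) % n := by
            rw [hmod]; congr 1; omega
          have : p.val % n = (n - 1) % n :=
            Nat.ModEq.add_right_cancel' L hmod2
          have hpv : p.val = n - 1 := by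
            rwa [Nat.mod_eq_of_lt hplt, Nat.mod_eq_of_lt (by omega)] at this
          have : p = (⟨n - 1, by omega⟩ : Fin (n + 1)) := Fin.ext hpv
          rw [this, hpm] at hp
          exact Option.some_ne_none _ hp.symm
      · exact hid h
  rcases last_or_lt p with hp' | hp' <;> rcases last_or_lt q with hq' | hq'
  · rw [hp', hq']
  · exact (main q p hq' hp' hq hp).elim
  · exact (main p q hp' hq' hp hq).elim
  · -- both < n
    rcases h1 p hp' with h | h
    · rw [hp] at h; exact absurd h (Option.some_ne_none _)
    · rcases h1 q hq' with h' | h'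
      · rw [hq] at h'; exact absurd h' (Option.some_ne_none _)
      · rw [hp] at h; rw [hq] at h'
        have := (Option.some_injective _ h).symm.trans (Option.some_injective _ h')
        have hval := congrArg Fin.val this
        rw [fm_val hn, fm_val hn] at hval
        have : p.val % n = q.val % n := Nat.ModEq.add_right_cancel' L hval
        rw [Nat.mod_eq_of_lt hp', Nat.mod_eq_of_lt hq'] at this
        exact Fin.ext this

/-- Membership in `Nset` unfolded. -/
theorem nset_cases {n : ℕ} {g : PT (Fin (n + 1))} (hg : g ∈ Nset n) :
    g = idPT _ ∨ g ∈ Subsemigroup.closure {aPT n, bPT n} ∨ (∃ i j, g = ePT n i j) ∨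
      g = noPT _ := by
  rcases hg with ((h | h) | h) | h
  · exact Or.inl h
  · exact Or.inr (Or.inl h)
  · exact Or.inr (Or.inr (Or.inl h))
  · exact Or.inr (Or.inr (Or.inr h))

theorem id_mem_nset {n : ℕ} : idPT (Fin (n + 1)) ∈ Nset n :=
  Or.inl (Or.inl (Or.inl rfl))

theorem word_mem_nset {n : ℕ} {w : PT (Fin (n + 1))}
    (h : w ∈ Subsemigroup.closure {aPT n, bPT n}) : w ∈ Nset n :=
  Or.inl (Or.inl (Or.inr h))

theorem e_mem_nset {n : ℕ} (i j : Fin (n + 1)) : ePT n i j ∈ Nset n :=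
  Or.inl (Or.inr ⟨i, j, rfl⟩)

theorem no_mem_nset {n : ℕ} : noPT (Fin (n + 1)) ∈ Nset n :=
  Or.inr rfl

/-- The classification used in the main argument: every element of `Nset` is either `Nice`
or belongs to the ideal (an `e_{i,j}` or the zero map). -/
theorem nset_class {n : ℕ} (hn : 0 < n) {g : PT (Fin (n + 1))} (hg : g ∈ Nset n) :
    (∃ L, Nice n L g) ∨ (∃ i j, g = ePT n i j) ∨ g = noPT _ := by
  rcases nset_cases hg with h | h | h | h
  · exact Or.inl ⟨0, h ▸ nice_id hn⟩
  · exact Or.inl (word_nice hn h)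
  · exact Or.inr (Or.inl h)
  · exact Or.inr (Or.inr h)

/-- Injectivity of all elements of `Nset`. -/
theorem nset_inj {n : ℕ} (hn : 0 < n) {g : PT (Fin (n + 1))} (hg : g ∈ Nset n)
    {p q v : Fin (n + 1)} (hp : g p = some v) (hq : g q = some v) : p = q := by
  rcases nset_class hn hg with ⟨L, hL⟩ | ⟨i, j, rfl⟩ | rfl
  · exact nice_inj hn hL hp hq
  · unfold ePT at hp hq
    by_cases h1 : p = i
    · by_cases h2 : q = i
      · rw [h1, h2]
      · rw [if_neg h2] at hq; exact absurd hq.symm (Option.some_ne_none _)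
    · rw [if_neg h1] at hp; exact absurd hp.symm (Option.some_ne_none _)
  · exact absurd hp.symm (Option.some_ne_none _)

/-! ### Multiplication lemmas for the ideal -/

theorem e_mul_of_some {n : ℕ} {g : PT (Fin (n + 1))} {c t : Fin (n + 1)} (i : Fin (n + 1))
    (h : g c = some t) : ePT n i c * g = ePT n i t := by
  funext x
  rw [PT.mul_apply]
  unfold ePT
  by_cases hx : x = i
  · rw [if_pos hx, if_pos hx, PT.bind_some, h]
  · rw [if_neg hx, if_neg hx]; rfl

theorem e_mul_of_none {n : ℕ} {g : PT (Fin (n + 1))} {c : Fin (n + 1)} (i : Fin (n + 1))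
    (h : g c = none) : ePT n i c * g = noPT _ := by
  funext x
  rw [PT.mul_apply]
  unfold ePT noPT
  by_cases hx : x = i
  · rw [if_pos hx, PT.bind_some, h]
  · rw [if_neg hx]; rfl

theorem e_mul_e {n : ℕ} (i c j e : Fin (n + 1)) :
    ePT n i c * ePT n j e = if c = j then ePT n i e else noPT _ := by
  by_cases h : c = j
  · rw [if_pos h]
    exact e_mul_of_some i (by unfold ePT; rw [if_pos h])
  · rw [if_neg h]
    exact e_mul_of_none i (by unfold ePT; rw [if_neg h])

/-- Multiplying an injective element of `Nset` by `e_{i,j}` on the right. -/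
theorem mul_e_mem {n : ℕ} (hn : 0 < n) {g : PT (Fin (n + 1))} (hg : g ∈ Nset n)
    (i j : Fin (n + 1)) : (∃ p q, g * ePT n i j = ePT n p q) ∨ g * ePT n i j = noPT _ := by
  by_cases h : ∃ p, g p = some i
  · obtain ⟨p, hp⟩ := h
    refine Or.inl ⟨p, j, ?_⟩
    funext x
    rw [PT.mul_apply]
    unfold ePT
    by_cases hx : x = p
    · subst hx; rw [hp, Option.bind_some, if_pos rfl, if_pos rfl]
    · rw [if_neg hx]
      cases hgx : g x with
      | none => rfl
      | some v =>
        rw [Option.bind_some]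
        show ePT n i j v = none
        unfold ePT
        rw [if_neg]
        intro hvi
        exact hx (nset_inj hn hg (by rw [hgx, hvi]) hp)
  · refine Or.inr ?_
    funext x
    rw [PT.mul_apply]
    cases hgx : g x with
    | none => rfl
    | some v =>
      rw [PT.bind_some]
      show ePT n i j v = none
      unfold ePT
      rw [if_neg]
      intro hvi
      exact h ⟨x, hvi ▸ hgx⟩

/-- `Nset` is closed under multiplication. -/
theorem nset_mul {n : ℕ} (hn : 0 < n) {f g : PT (Fin (n + 1))}
    (hf : f ∈ Nset n) (hg : g ∈ Nset n) : f * g ∈ Nset n := by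
  rcases nset_cases hf with rfl | hf' | ⟨i, c, rfl⟩ | rfl
  · rw [idPT_mul]; exact hg
  · rcases nset_cases hg with rfl | hg' | ⟨j, e, rfl⟩ | rfl
    · rw [mul_idPT]; exact word_mem_nset hf'
    · exact word_mem_nset (mul_mem hf' hg')
    · rcases mul_e_mem hn (word_mem_nset hf') j e with ⟨p, q, h⟩ | h
      · rw [h]; exact e_mem_nset p q
      · rw [h]; exact no_mem_nset
    · rw [mul_noPT]; exact no_mem_nset
  · cases hgc : g c with
    | none => rw [e_mul_of_none i hgc]; exact no_mem_nset
    | some t => rw [e_mul_of_some i hgc]; exact e_mem_nset i t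
  · rw [noPT_mul]; exact no_mem_nset
/-! ### The key stability lemma -/

theorem stepA {n L ℓ : ℕ} (hn : 0 < n) {lam rho z : PT (Fin (n + 1))}
    (hl1 : ∀ p : Fin (n + 1), p.val < n → lam p = none ∨ lam p = some (fm n (p.val + L)))
    (hz1 : ∀ p : Fin (n + 1), p.val < n → z p = none ∨ z p = some (fm n (p.val + ℓ)))
    (sl : ∀ p, lam p ≠ none → (lam * z * rho) p ≠ none) :
    ∀ k, lam (fm n k) ≠ none → rho (fm n (k + (L + ℓ))) ≠ none := by
  intro k h
  have hk := fm_lt hn k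
  have hval : lam (fm n k) = some (fm n (k + L)) := by
    rcases hl1 _ hk with h' | h'
    · exact absurd h' h
    · rw [h', fm_add hn]
  have hs := sl _ h
  rw [PT.mul_apply, PT.mul_apply, hval, PT.bind_some] at hs
  rcases hz1 _ (fm_lt hn (k + L)) with h' | h'
  · rw [h'] at hs; exact absurd rfl hs
  · rw [h', PT.bind_some, fm_add hn] at hs
    rwa [show k + L + ℓ = k + (L + ℓ) from by omega] at hs

/-- If `β` is defined at the top point but `α` is not, stability fails (for odd `n`). -/
theorem keyF {n : ℕ} (hn : 0 < n) {m : ℕ} (hm : n = 2 * m + 1) {L ℓ : ℕ}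
    {α β z : PT (Fin (n + 1))}
    (hα : Nice n L α) (hβ : Nice n L β) (hz : Nice n ℓ z)
    (sα : ∀ p, α p ≠ none → (α * z * β) p ≠ none)
    (sβ : ∀ p, β p ≠ none → (β * z * α) p ≠ none)
    (hα2 : α (Fin.last n) = none) (hβ2 : β (Fin.last n) ≠ none) : False := by
  set d := L + ℓ with hd
  have s1 : ∀ k, α (fm n k) ≠ none → β (fm n (k + d)) ≠ none := stepA hn hα.1 hz.1 sα
  have s2 : ∀ k, β (fm n k) ≠ none → α (fm n (k + d)) ≠ none := stepA hn hβ.1 hz.1 sβ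
  have l2 : ∀ k, α (fm n k) ≠ none → α (fm n (k + (d + d))) ≠ none := by
    intro k h
    have := s2 _ (s1 _ h)
    rwa [show k + d + d = k + (d + d) from by omega] at this
  have liter : ∀ (j k : ℕ), α (fm n k) ≠ none → α (fm n (k + (d + d) * j)) ≠ none := by
    intro j
    induction j with
    | zero => intro k h; simpa using h
    | succ i ih =>
      intro k h
      have := l2 _ (ih k h)
      rwa [show k + (d + d) * i + (d + d) = k + (d + d) * (i + 1) from by ring] at this
  have ld : ∀ k, α (fm n k) ≠ none → α (fm n (k + d)) ≠ none := by
    intro k h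
    have h2 := liter (m + 1) k h
    have e1 : k + (d + d) * (m + 1) = (k + d) + d * n := by rw [hm]; ring
    rwa [show fm n (k + (d + d) * (m + 1)) = fm n (k + d) from
      fm_congr (by rw [e1, Nat.add_mul_mod_self_right])] at h2
  have literd : ∀ (j k : ℕ), α (fm n k) ≠ none → α (fm n (k + d * j)) ≠ none := by
    intro j
    induction j with
    | zero => intro k h; simpa using h
    | succ i ih =>
      intro k h
      have := ld _ (ih k h)
      rwa [show k + d * i + d = k + d * (i + 1) from by ring] at this
  have AB : ∀ k, α (fm n k) ≠ none → β (fm n k) ≠ none := by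
    intro k h
    have h2 := s1 _ (literd (2 * m) k h)
    have e1 : k + d * (2 * m) + d = k + d * n := by rw [hm]; ring
    rwa [show fm n (k + d * (2 * m) + d) = fm n k from
      fm_congr (by rw [e1, Nat.add_mul_mod_self_right])] at h2
  have pmlt : ((⟨n - 1, by omega⟩ : Fin (n + 1))).val < n := by simp; omega
  by_cases hβid : β = idPT _
  · -- β is the identity
    subst hβid
    have hβlast : idPT (Fin (n + 1)) (Fin.last n) = some (Fin.last n) := rfl
    have hs := sβ (Fin.last n) (by rw [hβlast]; exact Option.some_ne_none _)
    rw [PT.mul_apply, PT.mul_apply, hβlast, PT.bind_some] at hs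
    rcases hz.2.1 with h | h | ⟨h, h0⟩
    · rw [h] at hs; exact hs rfl
    · -- z is not the identity; z (n-1) = none, contradiction at point n-1
      have hzid : z ≠ idPT _ := by
        intro hzeq
        rw [hzeq] at h
        have := congrArg Fin.val (Option.some_injective _ h)
        have h2 := fm_lt hn (n + ℓ - 1)
        simp [Fin.last, idPT] at this
        omega
      have hzpm := hz.2.2 (by rw [h]; exact Option.some_ne_none _) hzid
      have hs2 := sβ ⟨n - 1, by omega⟩ (Option.some_ne_none _)
      rw [PT.mul_apply, PT.mul_apply] at hs2
      have : idPT (Fin (n + 1)) ⟨n - 1, by omega⟩ = some ⟨n - 1, by omega⟩ := rfl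
      rw [this, PT.bind_some, hzpm] at hs2
      exact hs2 rfl
    · rw [h] at hs
      have : idPT (Fin (n + 1)) (Fin.last n) = some (Fin.last n) := rfl
      rw [this, PT.bind_some, hα2] at hs
      exact hs rfl
  · -- β is not the identity
    rcases hβ.2.1 with h | h | ⟨h, _⟩
    · exact hβ2 h
    · have hβpm := hβ.2.2 hβ2 hβid
      have hs := sβ (Fin.last n) hβ2
      rw [PT.mul_apply, PT.mul_apply, h, PT.bind_some] at hs
      rcases hz.1 _ (fm_lt hn (n + L - 1)) with h' | h'
      · rw [h'] at hs; exact hs rfl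
      · rw [h', PT.bind_some, fm_add hn] at hs
        -- hs : α (fm n (n + L - 1 + ℓ)) ≠ none
        have hα1 : α (fm n (n + d - 1)) ≠ none := by
          rwa [show n + L - 1 + ℓ = n + d - 1 from by omega] at hs
        have h2 := literd (2 * m) _ hα1
        have e1 : n + d - 1 + d * (2 * m) = (n - 1) + d * n := by
          have h' : d * n = d * (2 * m) + d := by rw [hm]; ring
          omega
        rw [show fm n (n + d - 1 + d * (2 * m)) = fm n (n - 1) from
          fm_congr (by rw [e1, Nat.add_mul_mod_self_right])] at h2
        have hfm : fm n (n - 1) = (⟨n - 1, by omega⟩ : Fin (n + 1)) :=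
          Fin.ext (by rw [fm_val hn, Nat.mod_eq_of_lt (by omega)])
        rw [hfm] at h2
        rw [← hfm] at hβpm
        exact AB (n - 1) (by rwa [hfm]) hβpm
        
    · exact hβid h

theorem orbit_lemma {n : ℕ} (hn : 0 < n) {m d : ℕ} (hm : n = 2 * m + 1)
    {P Q : Fin (n + 1) → Prop}
    (s1 : ∀ k, P (fm n k) → Q (fm n (k + d)))
    (s2 : ∀ k, Q (fm n k) → P (fm n (k + d))) :
    ∀ k, P (fm n k) → Q (fm n k) := by
  have l2 : ∀ k, P (fm n k) → P (fm n (k + (d + d))) := by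
    intro k h
    have := s2 _ (s1 _ h)
    rwa [show k + d + d = k + (d + d) from by omega] at this
  have liter : ∀ (j k : ℕ), P (fm n k) → P (fm n (k + (d + d) * j)) := by
    intro j
    induction j with
    | zero => intro k h; simpa using h
    | succ i ih =>
      intro k h
      have := l2 _ (ih k h)
      rwa [show k + (d + d) * i + (d + d) = k + (d + d) * (i + 1) from by ring] at this
  have ld : ∀ k, P (fm n k) → P (fm n (k + d)) := by
    intro k h
    have h2 := liter (m + 1) k h
    have e1 : k + (d + d) * (m + 1) = (k + d) + d * n := by rw [hm]; ring
    rwa [show fm n (k + (d + d) * (m + 1)) = fm n (k + d) from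
      fm_congr (by rw [e1, Nat.add_mul_mod_self_right])] at h2
  have literd : ∀ (j k : ℕ), P (fm n k) → P (fm n (k + d * j)) := by
    intro j
    induction j with
    | zero => intro k h; simpa using h
    | succ i ih =>
      intro k h
      have := ld _ (ih k h)
      rwa [show k + d * i + d = k + d * (i + 1) from by ring] at this
  intro k h
  have h2 := s1 _ (literd (2 * m) k h)
  have e1 : k + d * (2 * m) + d = k + d * n := by rw [hm]; ring
  rwa [show fm n (k + d * (2 * m) + d) = fm n k from
    fm_congr (by rw [e1, Nat.add_mul_mod_self_right])] at h2

/-- The main stability lemma: for odd `n`, if both Mal'cev products have the same domains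
as the originals, then the two sides agree. -/
theorem main_stab {n : ℕ} (hn : 0 < n) (hodd : Odd n) {L ℓ : ℕ}
    {lam rho z : PT (Fin (n + 1))}
    (hl : Nice n L lam) (hr : Nice n L rho) (hz : Nice n ℓ z)
    (sl : ∀ p, lam p ≠ none → (lam * z * rho) p ≠ none)
    (sr : ∀ p, rho p ≠ none → (rho * z * lam) p ≠ none) : lam = rho := by
  obtain ⟨m, hm⟩ := hodd
  have s1 := stepA hn hl.1 hz.1 sl
  have s2 := stepA hn hr.1 hz.1 sr
  have AB : ∀ k, lam (fm n k) ≠ none → rho (fm n k) ≠ none :=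
    orbit_lemma (P := fun p => lam p ≠ none) (Q := fun p => rho p ≠ none) hn hm s1 s2
  have BA : ∀ k, rho (fm n k) ≠ none → lam (fm n k) ≠ none :=
    orbit_lemma (P := fun p => rho p ≠ none) (Q := fun p => lam p ≠ none) hn hm s2 s1
  have domLR : ∀ p : Fin (n + 1), p.val < n → lam p = none → rho p = none := by
    intro p hp h
    by_contra h2
    have := BA p.val (by rwa [fm_self hn p hp])
    rw [fm_self hn p hp] at this
    exact this h
  have domRL : ∀ p : Fin (n + 1), p.val < n → rho p = none → lam p = none := by
    intro p hp h
    by_contra h2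
    have := AB p.val (by rwa [fm_self hn p hp])
    rw [fm_self hn p hp] at this
    exact this h
  funext p
  rcases last_or_lt p with hp | hp
  · subst hp
    cases hL1 : lam (Fin.last n) with
    | none =>
      cases hR1 : rho (Fin.last n) with
      | none => rfl
      | some t =>
        exact (keyF hn hm hl hr hz sl sr hL1
          (by rw [hR1]; exact Option.some_ne_none _)).elim
    | some s =>
      cases hR1 : rho (Fin.last n) with
      | none =>
        exact (keyF hn hm hr hl hz sr sl hR1
          (by rw [hL1]; exact Option.some_ne_none _)).elim
      | some t =>
        congr 1
        -- show s = t
        rcases hl.2.1 with h | h | ⟨h, _⟩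
        · rw [hL1] at h; exact absurd h (Option.some_ne_none _)
        · rcases hr.2.1 with h' | h' | ⟨h', _⟩
          · rw [hR1] at h'; exact absurd h' (Option.some_ne_none _)
          · rw [hL1] at h; rw [hR1] at h'
            rw [Option.some_injective _ h, Option.some_injective _ h']
          · -- rho = id, lam in rotation branch: contradiction
            exfalso
            have hlid : lam ≠ idPT _ := by
              intro he
              rw [he] at h
              have := congrArg Fin.val (Option.some_injective _ h)
              have h2 := fm_lt hn (n + L - 1)
              simp [Fin.last, idPT] at this
              omega
            have hlpm := hl.2.2 (by rw [hL1]; exact Option.some_ne_none _) hlid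
            have := domLR ⟨n - 1, by omega⟩ (by simp; omega) hlpm
            rw [h'] at this
            exact Option.some_ne_none _ this
        · -- lam = id
          rcases hr.2.1 with h' | h' | ⟨h', _⟩
          · rw [hR1] at h'; exact absurd h' (Option.some_ne_none _)
          · exfalso
            have hrid : rho ≠ idPT _ := by
              intro he
              rw [he] at h'
              have := congrArg Fin.val (Option.some_injective _ h')
              have h2 := fm_lt hn (n + L - 1)
              simp [Fin.last, idPT] at this
              omega
            have hrpm := hr.2.2 (by rw [hR1]; exact Option.some_ne_none _) hrid
            have := domRL ⟨n - 1, by omega⟩ (by simp; omega) hrpm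
            rw [h] at this
            exact Option.some_ne_none _ this
          · -- both id
            rw [h] at hL1; rw [h'] at hR1
            have e1 : s = Fin.last n := (Option.some_injective _ hL1).symm
            have e2 : t = Fin.last n := (Option.some_injective _ hR1).symm
            rw [e1, e2]
  · rcases hl.1 p hp with h | h
    · rw [h, domLR p hp h]
    · rcases hr.1 p hp with h' | h'
      · rw [domRL p hp h'] at h
        exact absurd h.symm (Option.some_ne_none _)
      · rw [h, h']
/-! ### The Mal'cev sequence machinery -/

theorem lr_succ {S : Type*} [Mul S] (X Y : S) (Z : ℕ → S) (m : ℕ) :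
    lr X Y Z (m + 1) =
      ((lr X Y Z m).1 * Z m * (lr X Y Z m).2, (lr X Y Z m).2 * Z m * (lr X Y Z m).1) := rfl

theorem lr_persist {S : Type*} [Mul S] {X Y : S} {Z : ℕ → S} {m : ℕ}
    (h : (lr X Y Z m).1 = (lr X Y Z m).2) :
    ∀ k, m ≤ k → (lr X Y Z k).1 = (lr X Y Z k).2 := by
  intro k hk
  induction k, hk using Nat.le_induction with
  | base => exact h
  | succ k hk ih =>
    show (lr X Y Z k).1 * Z k * (lr X Y Z k).2 = (lr X Y Z k).2 * Z k * (lr X Y Z k).1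
    rw [ih]

theorem lr_nice {n : ℕ} (hn : 0 < n) {X Y : PT (Fin (n + 1))} {Z : ℕ → PT (Fin (n + 1))}
    {LX LY : ℕ} (hX : Nice n LX X) (hY : Nice n LY Y) :
    ∀ m, 1 ≤ m → (∀ k, k < m → ∃ L, Nice n L (Z k)) →
      ∃ L, Nice n L (lr X Y Z m).1 ∧ Nice n L (lr X Y Z m).2 := by
  intro m hm
  induction m, hm using Nat.le_induction with
  | base =>
    intro hz
    obtain ⟨L0, h0⟩ := hz 0 Nat.one_pos
    refine ⟨LX + L0 + LY, ?_, ?_⟩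
    · exact nice_mul hn (nice_mul hn hX h0) hY
    · rw [show LX + L0 + LY = LY + L0 + LX from by ring]
      exact nice_mul hn (nice_mul hn hY h0) hX
  | succ m hm ih =>
    intro hz
    obtain ⟨L, h1, h2⟩ := ih (fun k hk => hz k (by omega))
    obtain ⟨Lm, hLm⟩ := hz m (by omega)
    refine ⟨L + Lm + L, ?_, ?_⟩
    · rw [lr_succ]
      exact nice_mul hn (nice_mul hn h1 hLm) h2
    · rw [lr_succ]
      exact nice_mul hn (nice_mul hn h2 hLm) h1

/-- Cardinality of the domain of a partial transformation. -/
def domcard {n : ℕ} (f : PT (Fin (n + 1))) : ℕ :=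
  (Finset.univ.filter (fun p => (f p).isSome)).card

theorem domcard_le {n : ℕ} {f g : PT (Fin (n + 1))} (h : ∀ p, g p ≠ none → f p ≠ none) :
    domcard g ≤ domcard f := by
  apply Finset.card_le_card
  intro p hp
  simp only [Finset.mem_filter, Finset.mem_univ, true_and, Option.isSome_iff_ne_none] at *
  exact h p hp

theorem dom_eq_of_card {n : ℕ} {f g : PT (Fin (n + 1))} (h : ∀ p, g p ≠ none → f p ≠ none)
    (hc : domcard f ≤ domcard g) : ∀ p, f p ≠ none → g p ≠ none := by
  have hsub : (Finset.univ.filter (fun p => (g p).isSome)) ⊆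
      (Finset.univ.filter (fun p => (f p).isSome)) := by
    intro p hp
    simp only [Finset.mem_filter, Finset.mem_univ, true_and,
      Option.isSome_iff_ne_none] at *
    exact h p hp
  have := Finset.eq_of_subset_of_card_le hsub hc
  intro p hp
  have hpmem : p ∈ Finset.univ.filter (fun p => (f p).isSome) := by
    simp only [Finset.mem_filter, Finset.mem_univ, true_and, Option.isSome_iff_ne_none]
    exact hp
  rw [← this] at hpmem
  simp only [Finset.mem_filter, Finset.mem_univ, true_and,
    Option.isSome_iff_ne_none] at hpmem
  exact hpmem

theorem domcard_le_card {n : ℕ} (f : PT (Fin (n + 1))) : domcard f ≤ n + 1 := by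
  refine le_trans (Finset.card_filter_le _ _) ?_
  simp

theorem dom_mul3 {Ω : Type*} (u v w : PT Ω) (p : Ω) (h : (u * v * w) p ≠ none) :
    u p ≠ none := by
  intro h0
  apply h
  rw [PT.mul_apply, PT.mul_apply, h0]
  rfl

theorem pigeon (f : ℕ → ℕ) (mono : ∀ m, f (m + 1) ≤ f m) (c : ℕ) (hb : f 1 ≤ c) :
    ∃ m, 1 ≤ m ∧ m ≤ c + 1 ∧ f (m + 1) = f m := by
  by_contra hcon
  push_neg at hcon
  have key : ∀ t, t ≤ c + 1 → f (1 + t) + t ≤ f 1 := by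
    intro t
    induction t with
    | zero => intro _; simp
    | succ i ih =>
      intro hi
      have h1 := ih (by omega)
      have h2 : f (1 + i + 1) < f (1 + i) :=
        lt_of_le_of_ne (mono (1 + i)) (hcon (1 + i) (by omega) (by omega))
      rw [show 1 + (i + 1) = 1 + i + 1 from by omega]
      omega
  have := key (c + 1) le_rfl
  omega

theorem caseA {n : ℕ} (hn : 0 < n) (hodd : Odd n) {X Y : PT (Fin (n + 1))}
    {Z : ℕ → PT (Fin (n + 1))} {LX LY : ℕ} (hX : Nice n LX X) (hY : Nice n LY Y)
    (hZ : ∀ k, k ≤ 2 * n + 3 → ∃ L, Nice n L (Z k)) :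
    ∃ m0, m0 ≤ 2 * n + 4 ∧ (lr X Y Z m0).1 = (lr X Y Z m0).2 := by
  have mono1 : ∀ m, ∀ p, (lr X Y Z (m + 1)).1 p ≠ none → (lr X Y Z m).1 p ≠ none := by
    intro m p h
    exact dom_mul3 _ _ _ p h
  have mono2 : ∀ m, ∀ p, (lr X Y Z (m + 1)).2 p ≠ none → (lr X Y Z m).2 p ≠ none := by
    intro m p h
    exact dom_mul3 _ _ _ p h
  set φ : ℕ → ℕ := fun m => domcard ((lr X Y Z m).1) + domcard ((lr X Y Z m).2) with hφ
  have mono : ∀ m, φ (m + 1) ≤ φ m := fun m =>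
    add_le_add (domcard_le (mono1 m)) (domcard_le (mono2 m))
  have hb : φ 1 ≤ 2 * n + 2 := by
    have h1 := domcard_le_card ((lr X Y Z 1).1)
    have h2 := domcard_le_card ((lr X Y Z 1).2)
    simp only [hφ]
    omega
  obtain ⟨m0, hm1, hm2, hm3⟩ := pigeon φ mono (2 * n + 2) hb
  have hc1 : domcard ((lr X Y Z m0).1) ≤ domcard ((lr X Y Z (m0 + 1)).1) := by
    have g1 := domcard_le (mono1 m0)
    have g2 := domcard_le (mono2 m0)
    simp only [hφ] at hm3
    omega
  have hc2 : domcard ((lr X Y Z m0).2) ≤ domcard ((lr X Y Z (m0 + 1)).2) := by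
    have g1 := domcard_le (mono1 m0)
    have g2 := domcard_le (mono2 m0)
    simp only [hφ] at hm3
    omega
  obtain ⟨L, hNl, hNr⟩ := lr_nice hn hX hY m0 hm1 (fun k hk => hZ k (by omega))
  obtain ⟨Lz, hNz⟩ := hZ m0 (by omega)
  have sl : ∀ p, (lr X Y Z m0).1 p ≠ none →
      ((lr X Y Z m0).1 * Z m0 * (lr X Y Z m0).2) p ≠ none := by
    intro p hp
    exact dom_eq_of_card (mono1 m0) hc1 p hp
  have sr : ∀ p, (lr X Y Z m0).2 p ≠ none →
      ((lr X Y Z m0).2 * Z m0 * (lr X Y Z m0).1) p ≠ none := by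
    intro p hp
    exact dom_eq_of_card (mono2 m0) hc2 p hp
  exact ⟨m0, by omega, main_stab hn hodd hNl hNr hNz sl sr⟩
/-! ### The swap lemma and the ideal case -/

theorem nice_some_lt {n L : ℕ} (hn : 0 < n) {w : PT (Fin (n + 1))} (hw : Nice n L w)
    {c v : Fin (n + 1)} (hc : c.val < n) (h : w c = some v) : v = fm n (c.val + L) := by
  rcases hw.1 c hc with h' | h'
  · rw [h] at h'; exact absurd h' (Option.some_ne_none _)
  · rw [h] at h'; exact Option.some_injective _ h'

theorem nice_some_last {n L : ℕ} {w : PT (Fin (n + 1))} (hw : Nice n L w)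
    {v : Fin (n + 1)} (h : w (Fin.last n) = some v) :
    v = fm n (n + L - 1) ∨ (w = idPT _ ∧ v = Fin.last n) := by
  rcases hw.2.1 with h' | h' | ⟨h', _⟩
  · rw [h] at h'; exact absurd h' (Option.some_ne_none _)
  · rw [h] at h'; exact Or.inl (Option.some_injective _ h')
  · refine Or.inr ⟨h', ?_⟩
    rw [h'] at h
    exact (Option.some_injective _ h).symm

theorem e_apply_some {n : ℕ} {p q c v : Fin (n + 1)} (h : ePT n p q c = some v) :
    c = p ∧ v = q := by
  unfold ePT at h
  by_cases hc : c = p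
  · rw [if_pos hc] at h
    exact ⟨hc, (Option.some_injective _ h).symm⟩
  · rw [if_neg hc] at h
    exact absurd h (Option.some_ne_none _).symm

theorem LLcancel {n mm : ℕ} (hm : n = 2 * mm + 1) {A1 A2 B1 B2 K L L' : ℕ}
    (q1 : A1 % n = B1 % n) (q2 : A2 % n = B2 % n)
    (e1 : A1 + A2 = K + (L + L)) (e2 : B1 + B2 = K + (L' + L')) : L % n = L' % n := by
  have q3 : A1 + A2 ≡ B1 + B2 [MOD n] := Nat.ModEq.add q1 q2
  rw [e1, e2] at q3
  have q5 : L + L ≡ L' + L' [MOD n] := Nat.ModEq.add_left_cancel' K q3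
  rw [← two_mul, ← two_mul] at q5
  exact Nat.ModEq.cancel_left_of_coprime (Nat.coprime_two_right.mpr ⟨mm, by omega⟩) q5

theorem swap_lemma {n : ℕ} (hn : 0 < n) {mm : ℕ} (hm : n = 2 * mm + 1)
    {z z' : PT (Fin (n + 1))} (hz : z ∈ Nset n) (hz' : z' ∈ Nset n)
    {c e i j : Fin (n + 1)} (h1 : z c = some j) (h2 : z e = some i)
    (h3 : z' c = some i) (h4 : z' e = some j) : i = j := by
  rcases nset_class hn hz with ⟨L, hL⟩ | ⟨p, q, rfl⟩ | rfl
  · rcases nset_class hn hz' with ⟨L', hL'⟩ | ⟨p, q, rfl⟩ | rfl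
    · -- both Nice
      rcases last_or_lt c with hc | hc <;> rcases last_or_lt e with he | he
      · -- c = e = last
        rw [hc] at h1
        rw [he] at h2
        rw [h1] at h2
        exact Option.some_injective _ h2.symm
      · -- c = last, e < n
        subst hc
        have hi : i = fm n (e.val + L) := nice_some_lt hn hL he h2
        have hj' : j = fm n (e.val + L') := nice_some_lt hn hL' he h4
        have hj : j = fm n (n + L - 1) := by
          rcases nice_some_last hL h1 with h | ⟨_, h⟩
          · exact h
          · exfalso
            have := congrArg Fin.val (hj'.symm.trans h)
            have h5 := fm_lt hn (e.val + L')
            simp [Fin.last] at this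
            omega
        have hi' : i = fm n (n + L' - 1) := by
          rcases nice_some_last hL' h3 with h | ⟨_, h⟩
          · exact h
          · exfalso
            have := congrArg Fin.val (hi.symm.trans h)
            have h5 := fm_lt hn (e.val + L)
            simp [Fin.last] at this
            omega
        -- congruences
        have q1 : (n + L - 1) % n = (e.val + L') % n := by
          have := congrArg Fin.val (hj.symm.trans hj')
          rwa [fm_val hn, fm_val hn] at this
        have q2 : (e.val + L) % n = (n + L' - 1) % n := by
          have := congrArg Fin.val (hi.symm.trans hi')
          rwa [fm_val hn, fm_val hn] at this
        have hLL : L % n = L' % n :=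
          LLcancel (K := n - 1 + e.val) hm q1 q2 (by omega) (by omega)
        rw [hi, hj']
        apply fm_congr
        rw [Nat.add_mod, hLL, ← Nat.add_mod]
      · -- c < n, e = last
        subst he
        have hj : j = fm n (c.val + L) := nice_some_lt hn hL hc h1
        have hi' : i = fm n (c.val + L') := nice_some_lt hn hL' hc h3
        have hi : i = fm n (n + L - 1) := by
          rcases nice_some_last hL h2 with h | ⟨_, h⟩
          · exact h
          · exfalso
            have := congrArg Fin.val (hi'.symm.trans h)
            have h5 := fm_lt hn (c.val + L')
            simp [Fin.last] at this
            omega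
        have hj' : j = fm n (n + L' - 1) := by
          rcases nice_some_last hL' h4 with h | ⟨_, h⟩
          · exact h
          · exfalso
            have := congrArg Fin.val (hj.symm.trans h)
            have h5 := fm_lt hn (c.val + L)
            simp [Fin.last] at this
            omega
        have q1 : (c.val + L) % n = (n + L' - 1) % n := by
          have := congrArg Fin.val (hj.symm.trans hj')
          rwa [fm_val hn, fm_val hn] at this
        have q2 : (n + L - 1) % n = (c.val + L') % n := by
          have := congrArg Fin.val (hi.symm.trans hi')
          rwa [fm_val hn, fm_val hn] at this
        have hLL : L % n = L' % n :=
          LLcancel (K := n - 1 + c.val) hm q1 q2 (by omega) (by omega)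
        rw [hi', hj]
        apply fm_congr
        rw [Nat.add_mod, ← hLL, ← Nat.add_mod]
      · -- both < n
        have hj : j = fm n (c.val + L) := nice_some_lt hn hL hc h1
        have hi : i = fm n (e.val + L) := nice_some_lt hn hL he h2
        have hi' : i = fm n (c.val + L') := nice_some_lt hn hL' hc h3
        have hj' : j = fm n (e.val + L') := nice_some_lt hn hL' he h4
        have q1 : (c.val + L) % n = (e.val + L') % n := by
          have := congrArg Fin.val (hj.symm.trans hj')
          rwa [fm_val hn, fm_val hn] at this
        have q2 : (e.val + L) % n = (c.val + L') % n := by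
          have := congrArg Fin.val (hi.symm.trans hi')
          rwa [fm_val hn, fm_val hn] at this
        have hLL : L % n = L' % n :=
          LLcancel (K := c.val + e.val) hm q1 q2 (by omega) (by omega)
        have hce : c.val % n = e.val % n := by
          have q3 : (c.val + L) % n = (e.val + L) % n := by
            rw [q1, Nat.add_mod, ← hLL, ← Nat.add_mod]
          exact Nat.ModEq.add_right_cancel' L q3
        have : c = e := by
          apply Fin.ext
          rwa [Nat.mod_eq_of_lt hc, Nat.mod_eq_of_lt he] at hce
        rw [this] at h1
        rw [h1] at h2
        exact Option.some_injective _ h2.symm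
    · -- z' = e_{p,q}
      obtain ⟨hc, hi⟩ := e_apply_some h3
      obtain ⟨he, hj⟩ := e_apply_some h4
      rw [hi, hj]
    · exact absurd h3 (Option.some_ne_none _).symm
  · -- z = e_{p,q}
    obtain ⟨hc, hj⟩ := e_apply_some h1
    obtain ⟨he, hi⟩ := e_apply_some h2
    rw [hi, hj]
  · exact absurd h1 (Option.some_ne_none _).symm

/-- Membership in the ideal. -/
def EI {n : ℕ} (f : PT (Fin (n + 1))) : Prop :=
  (∃ i j, f = ePT n i j) ∨ f = noPT _

theorem EI_mul_left {n : ℕ} {f g : PT (Fin (n + 1))} (hf : EI f) : EI (f * g) := by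
  rcases hf with ⟨i, c, rfl⟩ | rfl
  · cases hgc : g c with
    | none => rw [e_mul_of_none i hgc]; exact Or.inr rfl
    | some t => rw [e_mul_of_some i hgc]; exact Or.inl ⟨i, t, rfl⟩
  · rw [noPT_mul]; exact Or.inr rfl

theorem EI_mul_right {n : ℕ} (hn : 0 < n) {f g : PT (Fin (n + 1))} (hg : g ∈ Nset n)
    (hf : EI f) : EI (g * f) := by
  rcases hf with ⟨i, c, rfl⟩ | rfl
  · rcases mul_e_mem hn hg i c with ⟨p, q, h⟩ | h
    · rw [h]; exact Or.inl ⟨p, q, rfl⟩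
    · rw [h]; exact Or.inr rfl
  · rw [mul_noPT]; exact Or.inr rfl

theorem lr_mem {n : ℕ} (hn : 0 < n) {X Y : PT (Fin (n + 1))} {Z : ℕ → PT (Fin (n + 1))}
    (hX : X ∈ Nset n) (hY : Y ∈ Nset n) (hZ : ∀ k, Z k ∈ Nset n) :
    ∀ m, (lr X Y Z m).1 ∈ Nset n ∧ (lr X Y Z m).2 ∈ Nset n := by
  intro m
  induction m with
  | zero => exact ⟨hX, hY⟩
  | succ k ih =>
    exact ⟨nset_mul hn (nset_mul hn ih.1 (hZ k)) ih.2,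
      nset_mul hn (nset_mul hn ih.2 (hZ k)) ih.1⟩

theorem caseB {n : ℕ} (hn : 0 < n) {mm : ℕ} (hm : n = 2 * mm + 1)
    {X Y : PT (Fin (n + 1))} {Z : ℕ → PT (Fin (n + 1))}
    (hX : X ∈ Nset n) (hY : Y ∈ Nset n) (hZ : ∀ k, Z k ∈ Nset n)
    {s : ℕ} (hl : EI (lr X Y Z s).1) (hr : EI (lr X Y Z s).2) :
    ∀ k, s + 3 ≤ k → (lr X Y Z k).1 = (lr X Y Z k).2 := by
  have zstep : ∀ t, ((lr X Y Z t).1 = noPT _ ∨ (lr X Y Z t).2 = noPT _) →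
      (lr X Y Z (t + 1)).1 = (lr X Y Z (t + 1)).2 := by
    intro t ht
    show (lr X Y Z t).1 * Z t * (lr X Y Z t).2 = (lr X Y Z t).2 * Z t * (lr X Y Z t).1
    rcases ht with h | h
    · rw [h, noPT_mul, noPT_mul, mul_noPT]
    · rw [h, mul_noPT, noPT_mul, noPT_mul]
  intro k hk
  rcases hl with ⟨i, c, hic⟩ | hno
  swap
  · exact lr_persist (zstep s (Or.inl hno)) k (by omega)
  rcases hr with ⟨j, e, hje⟩ | hno2
  swap
  · exact lr_persist (zstep s (Or.inr hno2)) k (by omega)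
  by_cases heq : (lr X Y Z s).1 = (lr X Y Z s).2
  · exact lr_persist heq k (by omega)
  have hl1 : (lr X Y Z (s + 1)).1 = ePT n i c * Z s * ePT n j e := by
    show (lr X Y Z s).1 * Z s * (lr X Y Z s).2 = _
    rw [hic, hje]
  have hr1 : (lr X Y Z (s + 1)).2 = ePT n j e * Z s * ePT n i c := by
    show (lr X Y Z s).2 * Z s * (lr X Y Z s).1 = _
    rw [hic, hje]
  cases hzc : Z s c with
  | none =>
    have h1 : (lr X Y Z (s + 1)).1 = noPT _ := by
      rw [hl1, e_mul_of_none i hzc, noPT_mul]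
    exact lr_persist (zstep (s + 1) (Or.inl h1)) k (by omega)
  | some t =>
    by_cases htj : t = j
    case neg =>
      have h1 : (lr X Y Z (s + 1)).1 = noPT _ := by
        rw [hl1, e_mul_of_some i hzc, e_mul_e, if_neg htj]
      exact lr_persist (zstep (s + 1) (Or.inl h1)) k (by omega)
    rw [htj] at hzc
    have h1 : (lr X Y Z (s + 1)).1 = ePT n i e := by
      rw [hl1, e_mul_of_some i hzc, e_mul_e, if_pos rfl]
    cases hze : Z s e with
    | none =>
      have h2 : (lr X Y Z (s + 1)).2 = noPT _ := by
        rw [hr1, e_mul_of_none j hze, noPT_mul]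
      exact lr_persist (zstep (s + 1) (Or.inr h2)) k (by omega)
    | some u =>
      by_cases hui : u = i
      case neg =>
        have h2 : (lr X Y Z (s + 1)).2 = noPT _ := by
          rw [hr1, e_mul_of_some j hze, e_mul_e, if_neg hui]
        exact lr_persist (zstep (s + 1) (Or.inr h2)) k (by omega)
      rw [hui] at hze
      have h2 : (lr X Y Z (s + 1)).2 = ePT n j c := by
        rw [hr1, e_mul_of_some j hze, e_mul_e, if_pos rfl]
      -- second step
      have hl2 : (lr X Y Z (s + 2)).1 = ePT n i e * Z (s + 1) * ePT n j c := by
        show (lr X Y Z (s + 1)).1 * Z (s + 1) * (lr X Y Z (s + 1)).2 = _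
        rw [h1, h2]
      have hr2 : (lr X Y Z (s + 2)).2 = ePT n j c * Z (s + 1) * ePT n i e := by
        show (lr X Y Z (s + 1)).2 * Z (s + 1) * (lr X Y Z (s + 1)).1 = _
        rw [h1, h2]
      cases hz'e : Z (s + 1) e with
      | none =>
        have h3 : (lr X Y Z (s + 2)).1 = noPT _ := by
          rw [hl2, e_mul_of_none i hz'e, noPT_mul]
        exact lr_persist (zstep (s + 2) (Or.inl h3)) k (by omega)
      | some t' =>
        by_cases ht'j : t' = j
        case neg =>
          have h3 : (lr X Y Z (s + 2)).1 = noPT _ := by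
            rw [hl2, e_mul_of_some i hz'e, e_mul_e, if_neg ht'j]
          exact lr_persist (zstep (s + 2) (Or.inl h3)) k (by omega)
        rw [ht'j] at hz'e
        cases hz'c : Z (s + 1) c with
        | none =>
          have h3 : (lr X Y Z (s + 2)).2 = noPT _ := by
            rw [hr2, e_mul_of_none j hz'c, noPT_mul]
          exact lr_persist (zstep (s + 2) (Or.inr h3)) k (by omega)
        | some u' =>
          by_cases hu'i : u' = i
          case neg =>
            have h3 : (lr X Y Z (s + 2)).2 = noPT _ := by
              rw [hr2, e_mul_of_some j hz'c, e_mul_e, if_neg hu'i]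
            exact lr_persist (zstep (s + 2) (Or.inr h3)) k (by omega)
          rw [hu'i] at hz'c
          -- the sustained swap: contradiction with heq
          exfalso
          have hij : i = j := swap_lemma hn hm (hZ s) (hZ (s + 1)) hzc hze hz'c hz'e
          have hce : c = e := by
            apply nset_inj hn (hZ s) hzc
            rw [hze, hij]
          apply heq
          rw [hic, hje, hij, hce]
/-- The master lemma for odd `n`: at level `2n+10` the two Mal'cev products coincide for all
choices in `Nset`. -/
theorem core_odd {n : ℕ} (hn : 0 < n) (hodd : Odd n) {X Y : PT (Fin (n + 1))}
    {Z : ℕ → PT (Fin (n + 1))} (hX : X ∈ Nset n) (hY : Y ∈ Nset n)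
    (hZ : ∀ k, Z k ∈ Nset n) :
    (lr X Y Z (2 * n + 10)).1 = (lr X Y Z (2 * n + 10)).2 := by
  obtain ⟨mm, hm⟩ := hodd
  rcases nset_class hn hX with ⟨LX, hNX⟩ | hIX
  · rcases nset_class hn hY with ⟨LY, hNY⟩ | hIY
    · by_cases hz : ∀ k, k ≤ 2 * n + 3 → ∃ L, Nice n L (Z k)
      · obtain ⟨m0, hm0, heq⟩ := caseA hn ⟨mm, hm⟩ hNX hNY hz
        exact lr_persist heq _ (by omega)
      · push_neg at hz
        obtain ⟨k, hk1, hk2⟩ := hz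
        have hEIZ : EI (Z k) := by
          rcases nset_class hn (hZ k) with h | h | h
          · obtain ⟨L, hL⟩ := h
            exact absurd hL (hk2 L)
          · exact Or.inl h
          · exact Or.inr h
        have hmem := lr_mem hn hX hY hZ k
        have hl : EI (lr X Y Z (k + 1)).1 := by
          have h0 : (lr X Y Z (k + 1)).1 = (lr X Y Z k).1 * Z k * (lr X Y Z k).2 := rfl
          rw [h0]
          exact EI_mul_left (EI_mul_right hn hmem.1 hEIZ)
        have hr : EI (lr X Y Z (k + 1)).2 := by
          have h0 : (lr X Y Z (k + 1)).2 = (lr X Y Z k).2 * Z k * (lr X Y Z k).1 := rfl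
          rw [h0]
          exact EI_mul_left (EI_mul_right hn hmem.2 hEIZ)
        exact caseB hn hm hX hY hZ hl hr _ (by omega)
    · have hEIY : EI Y := hIY
      have hl : EI (lr X Y Z 1).1 := by
        have h0 : (lr X Y Z 1).1 = X * Z 0 * Y := rfl
        rw [h0]
        exact EI_mul_right hn (nset_mul hn hX (hZ 0)) hEIY
      have hr : EI (lr X Y Z 1).2 := by
        have h0 : (lr X Y Z 1).2 = Y * Z 0 * X := rfl
        rw [h0]
        exact EI_mul_left (EI_mul_left hEIY)
      exact caseB hn hm hX hY hZ hl hr _ (by omega)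
  · have hEIX : EI X := hIX
    have hl : EI (lr X Y Z 1).1 := by
      have h0 : (lr X Y Z 1).1 = X * Z 0 * Y := rfl
      rw [h0]
      exact EI_mul_left (EI_mul_left hEIX)
    have hr : EI (lr X Y Z 1).2 := by
      have h0 : (lr X Y Z 1).2 = Y * Z 0 * X := rfl
      rw [h0]
      exact EI_mul_right hn (nset_mul hn hY (hZ 0)) hEIX
    exact caseB hn hm hX hY hZ hl hr _ (by omega)
/-! ### Transfer to the subsemigroup and the final theorem -/

/-- `Nset` as a subsemigroup. -/
def NsetSub (n : ℕ) (hn : 0 < n) : Subsemigroup (PT (Fin (n + 1))) where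
  carrier := Nset n
  mul_mem' := fun ha hb => nset_mul hn ha hb

theorem closure_Nset (n : ℕ) (hn : 0 < n) :
    Subsemigroup.closure (Nset n) = NsetSub n hn :=
  Subsemigroup.closure_eq (NsetSub n hn)

theorem mem_of_closure {n : ℕ} (hn : 0 < n) (x : ↥(Subsemigroup.closure (Nset n))) :
    (x : PT (Fin (n + 1))) ∈ Nset n := by
  have hle : Subsemigroup.closure (Nset n) ≤ NsetSub n hn :=
    Subsemigroup.closure_le.mpr (fun g hg => hg)
  exact hle x.2

/-- The substitution homomorphism from `(N)¹` to the full monoid of partial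
transformations. -/
def piHom (n : ℕ) : WithOne ↥(Subsemigroup.closure (Nset n)) →* PT (Fin (n + 1)) :=
  WithOne.lift ⟨fun s => (s : PT (Fin (n + 1))), fun _ _ => rfl⟩

theorem piHom_coe (n : ℕ) (s : ↥(Subsemigroup.closure (Nset n))) :
    piHom n (↑s) = (s : PT (Fin (n + 1))) := rfl

theorem piHom_mem {n : ℕ} (hn : 0 < n) (u : WithOne ↥(Subsemigroup.closure (Nset n))) :
    piHom n u ∈ Nset n := by
  by_cases hu : u = 1
  · rw [hu, map_one]
    exact id_mem_nset
  · obtain ⟨a, ha⟩ := WithOne.ne_one_iff_exists.mp hu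
    rw [← ha, piHom_coe]
    exact mem_of_closure hn a

theorem pi_lr (n : ℕ) (x y : ↥(Subsemigroup.closure (Nset n)))
    (z : ℕ → WithOne ↥(Subsemigroup.closure (Nset n))) :
    ∀ m, piHom n ((lr (↑x) (↑y) z m).1) =
        (lr (x : PT (Fin (n + 1))) (y : PT (Fin (n + 1))) (fun k => piHom n (z k)) m).1 ∧
      piHom n ((lr (↑x) (↑y) z m).2) =
        (lr (x : PT (Fin (n + 1))) (y : PT (Fin (n + 1))) (fun k => piHom n (z k)) m).2 := by
  intro m
  induction m with
  | zero => exact ⟨rfl, rfl⟩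
  | succ k ih =>
    obtain ⟨ih1, ih2⟩ := ih
    constructor
    · show piHom n ((lr (↑x) (↑y) z k).1 * z k * (lr (↑x) (↑y) z k).2) = _
      rw [map_mul, map_mul, ih1, ih2]
      rfl
    · show piHom n ((lr (↑x) (↑y) z k).2 * z k * (lr (↑x) (↑y) z k).1) = _
      rw [map_mul, map_mul, ih1, ih2]
      rfl

theorem sandwich {S : Type*} [Semigroup S] (s t : S) (u : WithOne S) :
    ∃ r : S, (↑s * u * ↑t : WithOne S) = ↑r := by
  by_cases hu : u = 1
  · exact ⟨s * t, by rw [hu, mul_one, ← WithOne.coe_mul]⟩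
  · obtain ⟨a, ha⟩ := WithOne.ne_one_iff_exists.mp hu
    exact ⟨s * a * t, by rw [← ha, ← WithOne.coe_mul, ← WithOne.coe_mul]⟩

theorem lr_coe {S : Type*} [Semigroup S] (x y : S) (z : ℕ → WithOne S) :
    ∀ m, 1 ≤ m → ∃ p q : S, (lr (↑x) (↑y) z m).1 = ↑p ∧ (lr (↑x) (↑y) z m).2 = ↑q := by
  intro m hm
  induction m, hm using Nat.le_induction with
  | base =>
    obtain ⟨p, hp⟩ := sandwich x y (z 0)
    obtain ⟨q, hq⟩ := sandwich y x (z 0)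
    exact ⟨p, q, hp, hq⟩
  | succ k hk ih =>
    obtain ⟨p, q, hp, hq⟩ := ih
    obtain ⟨p', hp'⟩ := sandwich p q (z k)
    obtain ⟨q', hq'⟩ := sandwich q p (z k)
    refine ⟨p', q', ?_, ?_⟩
    · show (lr (↑x) (↑y) z k).1 * z k * (lr (↑x) (↑y) z k).2 = _
      rw [hp, hq, hp']
    · show (lr (↑x) (↑y) z k).2 * z k * (lr (↑x) (↑y) z k).1 = _
      rw [hp, hq, hq']

theorem oddMN (n : ℕ) (hn : 0 < n) (hodd : Odd n) :
    MalcevNilpotent ↥(Subsemigroup.closure (Nset n)) := by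
  refine ⟨2 * n + 10, by omega, ?_⟩
  intro x y z
  obtain ⟨p, q, hp, hq⟩ := lr_coe x y z (2 * n + 10) (by omega)
  suffices h : p = q by rw [hp, hq, h]
  apply Subtype.ext
  have h1 := (pi_lr n x y z (2 * n + 10)).1
  have h2 := (pi_lr n x y z (2 * n + 10)).2
  rw [hp, piHom_coe] at h1
  rw [hq, piHom_coe] at h2
  rw [h1, h2]
  exact core_odd hn hodd (mem_of_closure hn x) (mem_of_closure hn y)
    (fun k => piHom_mem hn (z k))

/-! ### The even case: the explicit counterexample sequence -/

/-- `apow n k = a^(k+1)`. -/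
def apow (n : ℕ) : ℕ → PT (Fin (n + 1))
  | 0 => aPT n
  | k + 1 => apow n k * aPT n

theorem apow_mem (n : ℕ) : ∀ k, apow n k ∈ Subsemigroup.closure {aPT n, bPT n} := by
  intro k
  induction k with
  | zero => exact Subsemigroup.subset_closure (Set.mem_insert _ _)
  | succ i ih =>
    exact mul_mem ih (Subsemigroup.subset_closure (Set.mem_insert _ _))

theorem a_val {n : ℕ} (hn : 0 < n) (p : Fin (n + 1)) (hp : p.val < n) :
    aPT n p = some (fm n (p.val + 1)) := by
  unfold aPT
  rcases Nat.lt_or_ge (p.val + 1) n with h | h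
  · rw [dif_pos h]
    congr 1; apply Fin.ext
    rw [fm_val hn, Nat.mod_eq_of_lt h]
  · have h2 : p.val + 1 = n := by omega
    rw [dif_neg (by omega), if_pos h2]
    congr 1; apply Fin.ext
    rw [fm_val hn, h2, Nat.mod_self]

theorem apow_val {n : ℕ} (hn : 0 < n) :
    ∀ k (p : Fin (n + 1)), p.val < n → apow n k p = some (fm n (p.val + k + 1)) := by
  intro k
  induction k with
  | zero => intro p hp; exact a_val hn p hp
  | succ i ih =>
    intro p hp
    show (apow n i * aPT n) p = _
    rw [PT.mul_apply, ih p hp, PT.bind_some, a_val hn _ (fm_lt hn _), fm_add hn]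
    congr 2 <;> omega

theorem evenNotMN (n : ℕ) (hn : 1 ≤ n) (hev : ¬Odd n) :
    ¬MalcevNilpotent ↥(Subsemigroup.closure (Nset n)) := by
  have hn2 : 2 ≤ n := by
    rcases Nat.even_or_odd n with h | h
    · obtain ⟨t, ht⟩ := h; omega
    · exact absurd h hev
  have hmod : n % 2 = 0 := by
    rcases Nat.even_or_odd n with h | h
    · obtain ⟨t, ht⟩ := h; omega
    · exact absurd h hev
  have hh1 : 1 ≤ n / 2 := by omega
  have hhn : n / 2 < n := by omega
  have hsum : n / 2 + n / 2 = n := by omega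
  set hf : Fin (n + 1) := ⟨n / 2, by omega⟩ with hfdef
  set zf : Fin (n + 1) := ⟨0, by omega⟩ with zfdef
  have hzf_ne : zf ≠ hf := by
    intro h
    have h2 : (0 : ℕ) = n / 2 := congrArg Fin.val h
    omega
  set w : PT (Fin (n + 1)) := apow n (n / 2 - 1) with wdef
  have hw0 : w zf = some hf := by
    rw [wdef, apow_val (by omega) _ zf (by simp [zfdef]; omega)]
    congr 1
    apply Fin.ext
    rw [fm_val (by omega), show zf.val + (n / 2 - 1) + 1 = n / 2 from by simp [zfdef]; omega,
      Nat.mod_eq_of_lt hhn]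
  have hwh : w hf = some zf := by
    rw [wdef, apow_val (by omega) _ hf (by simp [hfdef]; omega)]
    congr 1
    apply Fin.ext
    rw [fm_val (by omega), show hf.val + (n / 2 - 1) + 1 = n from by simp [hfdef]; omega,
      Nat.mod_self]
  set S := ↥(Subsemigroup.closure (Nset n)) with Sdef
  set ea : S := ⟨ePT n zf hf, Subsemigroup.subset_closure (e_mem_nset _ _)⟩ with eadef
  set eb : S := ⟨ePT n hf zf, Subsemigroup.subset_closure (e_mem_nset _ _)⟩ with ebdef
  set uu : S := ⟨ePT n zf zf, Subsemigroup.subset_closure (e_mem_nset _ _)⟩ with uudef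
  set vv : S := ⟨ePT n hf hf, Subsemigroup.subset_closure (e_mem_nset _ _)⟩ with vvdef
  set ws : S := ⟨w, Subsemigroup.subset_closure (word_mem_nset (apow_mem n _))⟩ with wsdef
  have p1 : ea * eb = uu := by
    apply Subtype.ext
    show ePT n zf hf * ePT n hf zf = ePT n zf zf
    rw [e_mul_e, if_pos rfl]
  have p2 : eb * ea = vv := by
    apply Subtype.ext
    show ePT n hf zf * ePT n zf hf = ePT n hf hf
    rw [e_mul_e, if_pos rfl]
  have p3 : uu * ws * vv = ea := by
    apply Subtype.ext
    show ePT n zf zf * w * ePT n hf hf = ePT n zf hf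
    rw [e_mul_of_some zf hw0, e_mul_e, if_pos rfl]
  have p4 : vv * ws * uu = eb := by
    apply Subtype.ext
    show ePT n hf hf * w * ePT n zf zf = ePT n hf zf
    rw [e_mul_of_some hf hwh, e_mul_e, if_pos rfl]
  set zfun : ℕ → WithOne S := fun k => if Even k then 1 else ↑ws with zfundef
  have key : ∀ m, (lr (↑ea) (↑eb) zfun m).1 = (if Even m then (↑ea : WithOne S) else ↑uu) ∧
      (lr (↑ea) (↑eb) zfun m).2 = (if Even m then (↑eb : WithOne S) else ↑vv) := by
    intro m
    induction m with
    | zero =>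
      constructor
      · rw [if_pos Even.zero]; rfl
      · rw [if_pos Even.zero]; rfl
    | succ k ih =>
      obtain ⟨ih1, ih2⟩ := ih
      by_cases hk : Even k
      · have hz : zfun k = 1 := if_pos hk
        have hk1 : ¬Even (k + 1) := by simp [Nat.even_add_one, hk]
        constructor
        · show (lr (↑ea) (↑eb) zfun k).1 * zfun k * (lr (↑ea) (↑eb) zfun k).2 = _
          rw [ih1, ih2, hz, if_pos hk, if_pos hk, mul_one, if_neg hk1, ← WithOne.coe_mul, p1]
        · show (lr (↑ea) (↑eb) zfun k).2 * zfun k * (lr (↑ea) (↑eb) zfun k).1 = _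
          rw [ih1, ih2, hz, if_pos hk, if_pos hk, mul_one, if_neg hk1, ← WithOne.coe_mul, p2]
      · have hz : zfun k = ↑ws := if_neg hk
        have hk1 : Even (k + 1) := Nat.even_add_one.mpr hk
        constructor
        · show (lr (↑ea) (↑eb) zfun k).1 * zfun k * (lr (↑ea) (↑eb) zfun k).2 = _
          rw [ih1, ih2, hz, if_neg hk, if_neg hk, if_pos hk1, ← WithOne.coe_mul,
            ← WithOne.coe_mul, p3]
        · show (lr (↑ea) (↑eb) zfun k).2 * zfun k * (lr (↑ea) (↑eb) zfun k).1 = _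
          rw [ih1, ih2, hz, if_neg hk, if_neg hk, if_pos hk1, ← WithOne.coe_mul,
            ← WithOne.coe_mul, p4]
  rintro ⟨m, hm1, hall⟩
  have hEq := hall ea eb zfun
  rw [(key m).1, (key m).2] at hEq
  by_cases hmE : Even m
  · rw [if_pos hmE, if_pos hmE] at hEq
    have : ea = eb := WithOne.coe_inj.mp hEq
    have hval : ePT n zf hf = ePT n hf zf := congrArg Subtype.val this
    have := congrFun hval zf
    unfold ePT at this
    rw [if_pos rfl, if_neg hzf_ne] at this
    exact Option.some_ne_none _ this
  · rw [if_neg hmE, if_neg hmE] at hEq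
    have : uu = vv := WithOne.coe_inj.mp hEq
    have hval : ePT n zf zf = ePT n hf hf := congrArg Subtype.val this
    have := congrFun hval zf
    unfold ePT at this
    rw [if_pos rfl, if_neg hzf_ne] at this
    exact Option.some_ne_none _ this
/-- `N` is a subsemigroup of the partial transformation semigroup, and `N` is Mal'cev
nilpotent if and only if `n` is odd. -/
theorem stmt18 (n : ℕ) (hn : 1 ≤ n) :
    (∀ f ∈ Nset n, ∀ g ∈ Nset n, f * g ∈ Nset n) ∧
      (MalcevNilpotent (Subsemigroup.closure (Nset n)) ↔ Odd n) := by
  refine ⟨fun f hf g hg => nset_mul hn hf hg, ?_, fun hodd => oddMN n hn hodd⟩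
  intro hMN
  by_contra hodd
  exact evenNotMN n hn hodd hMN


end SMN
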